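/- Fix α ∈ (0,1) and λ > 0. Let f_α : (0,∞) → [0,∞) be a measurable function with ∫₀^∞ f_α(t) dt = 1 and ∫₀^∞ e^{-μ t} f_α(t) dt = e^{-μ^α} for all μ ≥ 0. Let T be a random variable with density t ↦ e^{λ^α} e^{-λ t} f_α(t) on (0,∞) and let E be an independent Exp(1) random variable. Then for every y ≥ 0, P(E/T > y) = e^{-((λ+y)^α - λ^α)}; equivalently, E/T has the same distribution as (λ^α + E)^{1/α} - λ. -/

import Mathlib

open MeasureTheory Set

/-- The Exp(1) distribution, with density `e^{-t}` on `(0,∞)`. -/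
noncomputable def expM : Measure ℝ :=
  volume.withDensity ((Set.Ioi (0 : ℝ)).indicator fun t => ENNReal.ofReal (Real.exp (-t)))

/-- The law of the exponentially tilted stable variable `S_{α,0}(λ)`, with density
`e^{λ^α} e^{-λ t} f_α(t)` on `(0,∞)`. -/
noncomputable def tiltedStable (α lam : ℝ) (f : ℝ → ℝ) : Measure ℝ :=
  volume.withDensity ((Set.Ioi (0 : ℝ)).indicator fun t =>
    ENNReal.ofReal (Real.exp (lam ^ α) * Real.exp (-lam * t) * f t))

lemma expJ (a : ℝ) : ∫⁻ t in Set.Ioi a, ENNReal.ofReal (Real.exp (-t))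
    = ENNReal.ofReal (Real.exp (-a)) := by
  rw [← ofReal_integral_eq_lintegral_ofReal]
  · rw [integral_exp_neg_Ioi]
  · exact (by simpa using exp_neg_integrableOn_Ioi a one_pos :
      IntegrableOn (fun x => Real.exp (-x)) (Ioi a) volume)
  · exact Filter.Eventually.of_forall fun x => (Real.exp_pos _).le

lemma expM_apply {s : Set ℝ} (hs : MeasurableSet s) :
    expM s = ∫⁻ t in Set.Ioi 0 ∩ s, ENNReal.ofReal (Real.exp (-t)) := by
  rw [expM, withDensity_apply _ hs, setLIntegral_indicator measurableSet_Ioi]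

lemma expM_Ioi {a : ℝ} (ha : 0 ≤ a) : expM (Set.Ioi a) = ENNReal.ofReal (Real.exp (-a)) := by
  rw [expM_apply measurableSet_Ioi, inter_eq_right.mpr (Ioi_subset_Ioi ha), expJ]

lemma expM_Ioi_nonpos {a : ℝ} (ha : a ≤ 0) : expM (Set.Ioi a) = 1 := by
  rw [expM_apply measurableSet_Ioi, inter_eq_left.mpr (Ioi_subset_Ioi ha), expJ]
  simp

instance : IsProbabilityMeasure expM := by
  constructor
  rw [expM_apply MeasurableSet.univ, inter_univ, expJ]
  simp

lemma key_lintegral (α : ℝ) (hα : α ∈ Set.Ioo (0 : ℝ) 1) (lam : ℝ) (hlam : 0 < lam)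
    (f : ℝ → ℝ) (hfmeas : Measurable f)
    (hfnn : ∀ t ∈ Set.Ioi (0 : ℝ), 0 ≤ f t)
    (hfint : ∫ t in Set.Ioi (0 : ℝ), f t = 1)
    (hflap : ∀ c : ℝ, 0 ≤ c →
      ∫ t in Set.Ioi (0 : ℝ), Real.exp (-c * t) * f t = Real.exp (-(c ^ α)))
    (c : ℝ) (hc : 0 ≤ c) :
    ∫⁻ t in Set.Ioi (0:ℝ),
        ENNReal.ofReal (Real.exp (lam ^ α) * Real.exp (-lam * t) * f t)
          * ENNReal.ofReal (Real.exp (-(c * t)))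
      = ENNReal.ofReal (Real.exp (lam ^ α - (lam + c) ^ α)) := by
  have hint : IntegrableOn f (Set.Ioi (0:ℝ)) := by
    by_contra h
    rw [MeasureTheory.integral_undef h] at hfint
    exact one_ne_zero hfint.symm
  have hint2 : IntegrableOn (fun t => Real.exp (-(lam + c) * t) * f t) (Set.Ioi (0:ℝ)) := by
    refine hint.mono' ((Real.measurable_exp.comp (measurable_id.const_mul _)).mul
      hfmeas).aestronglyMeasurable ?_
    refine (ae_restrict_iff' measurableSet_Ioi).mpr (Filter.Eventually.of_forall fun t ht => ?_)
    have ht0 : (0:ℝ) < t := ht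
    have h1 : Real.exp (-(lam + c) * t) ≤ 1 := by
      rw [Real.exp_le_one_iff]
      nlinarith
    have h2 := hfnn t ht
    rw [norm_mul, Real.norm_eq_abs, Real.norm_eq_abs, abs_of_pos (Real.exp_pos _),
      abs_of_nonneg h2]
    nlinarith [Real.exp_pos (-(lam + c) * t)]
  have heq : ∀ t ∈ Set.Ioi (0:ℝ),
      ENNReal.ofReal (Real.exp (lam ^ α) * Real.exp (-lam * t) * f t)
          * ENNReal.ofReal (Real.exp (-(c * t)))
        = ENNReal.ofReal (Real.exp (lam ^ α) * (Real.exp (-(lam + c) * t) * f t)) := by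
    intro t ht
    have h2 := hfnn t ht
    rw [← ENNReal.ofReal_mul (by positivity)]
    congr 1
    have h3 : Real.exp (-lam * t) * Real.exp (-(c * t)) = Real.exp (-(lam + c) * t) := by
      rw [← Real.exp_add]; ring_nf
    calc Real.exp (lam ^ α) * Real.exp (-lam * t) * f t * Real.exp (-(c * t))
        = Real.exp (lam ^ α) * ((Real.exp (-lam * t) * Real.exp (-(c * t))) * f t) := by ring
      _ = Real.exp (lam ^ α) * (Real.exp (-(lam + c) * t) * f t) := by rw [h3]
  rw [setLIntegral_congr_fun measurableSet_Ioi heq]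
  rw [← ofReal_integral_eq_lintegral_ofReal (hint2.const_mul _)]
  · congr 1
    rw [MeasureTheory.integral_const_mul, hflap (lam + c) (by positivity), ← Real.exp_add,
      ← sub_eq_add_neg]
  · refine (ae_restrict_iff' measurableSet_Ioi).mpr (Filter.Eventually.of_forall fun t ht => ?_)
    have := hfnn t ht
    positivity

lemma prod_Ioi_eq (α : ℝ) (lam : ℝ) (f : ℝ → ℝ) (hfmeas : Measurable f) (y : ℝ) :
    ((tiltedStable α lam f).prod expM) {p : ℝ × ℝ | y < p.2 / p.1}
      = ∫⁻ x in Set.Ioi (0:ℝ),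
          ENNReal.ofReal (Real.exp (lam ^ α) * Real.exp (-lam * x) * f x)
            * expM (Set.Ioi (y * x)) := by
  have hS : MeasurableSet {p : ℝ × ℝ | y < p.2 / p.1} :=
    measurableSet_lt measurable_const (measurable_snd.div measurable_fst)
  have hdens : Measurable fun x : ℝ =>
      ENNReal.ofReal (Real.exp (lam ^ α) * Real.exp (-lam * x) * f x) :=
    (((Real.measurable_exp.comp (measurable_id.const_mul (-lam))).const_mul _).mul
      hfmeas).ennreal_ofReal
  rw [Measure.prod_apply hS, tiltedStable,
    lintegral_withDensity_eq_lintegral_mul _ (hdens.indicator measurableSet_Ioi)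
      (measurable_measure_prodMk_left hS)]
  simp only [Pi.mul_apply]
  have hmul : ∀ x : ℝ,
      (Set.Ioi (0:ℝ)).indicator
          (fun t => ENNReal.ofReal (Real.exp (lam ^ α) * Real.exp (-lam * t) * f t)) x
        * expM (Prod.mk x ⁻¹' {p : ℝ × ℝ | y < p.2 / p.1})
      = (Set.Ioi (0:ℝ)).indicator
          (fun t => ENNReal.ofReal (Real.exp (lam ^ α) * Real.exp (-lam * t) * f t)
            * expM (Prod.mk t ⁻¹' {p : ℝ × ℝ | y < p.2 / p.1})) x := by
    intro x
    by_cases hx : x ∈ Set.Ioi (0:ℝ)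
    · simp [Set.indicator_of_mem hx]
    · simp [Set.indicator_of_notMem hx]
  rw [lintegral_congr hmul, lintegral_indicator measurableSet_Ioi]
  refine setLIntegral_congr_fun measurableSet_Ioi (fun x hx => ?_)
  congr 1
  have hx0 : (0:ℝ) < x := hx
  have hsec : Prod.mk x ⁻¹' {p : ℝ × ℝ | y < p.2 / p.1} = Set.Ioi (y * x) := by
    ext e
    simp only [mem_preimage, mem_setOf_eq, mem_Ioi]
    exact lt_div_iff₀ hx0
  rw [hsec]

theorem stmt12 (α : ℝ) (hα : α ∈ Set.Ioo (0 : ℝ) 1) (lam : ℝ) (hlam : 0 < lam) (f : ℝ → ℝ) (hfmeas : Measurable f)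
    (hfnn : ∀ t ∈ Set.Ioi (0 : ℝ), 0 ≤ f t)
    (hfint : ∫ t in Set.Ioi (0 : ℝ), f t = 1)
    (hflap : ∀ c : ℝ, 0 ≤ c →
      ∫ t in Set.Ioi (0 : ℝ), Real.exp (-c * t) * f t = Real.exp (-(c ^ α))) :
    (∀ y : ℝ, 0 ≤ y →
        ((tiltedStable α lam f).prod expM) {p : ℝ × ℝ | y < p.2 / p.1}
          = ENNReal.ofReal (Real.exp (-((lam + y) ^ α - lam ^ α)))) ∧
      Measure.map (fun p : ℝ × ℝ => p.2 / p.1) ((tiltedStable α lam f).prod expM)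
        = Measure.map (fun t => (lam ^ α + t) ^ (1 / α) - lam) expM := by
  have key := key_lintegral α hα lam hlam f hfmeas hfnn hfint hflap
  obtain ⟨hα0, hα1⟩ := hα
  have part1 : ∀ y : ℝ, 0 ≤ y →
      ((tiltedStable α lam f).prod expM) {p : ℝ × ℝ | y < p.2 / p.1}
        = ENNReal.ofReal (Real.exp (-((lam + y) ^ α - lam ^ α))) := by
    intro y hy
    rw [prod_Ioi_eq α lam f hfmeas y]
    rw [setLIntegral_congr_fun measurableSet_Ioi (fun x hx => by
      rw [expM_Ioi (mul_nonneg hy (le_of_lt hx))])]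
    rw [key y hy]
    congr 1
    ring_nf
  refine ⟨part1, ?_⟩
  have part1' : ∀ y : ℝ, y < 0 →
      ((tiltedStable α lam f).prod expM) {p : ℝ × ℝ | y < p.2 / p.1} = 1 := by
    intro y hy
    rw [prod_Ioi_eq α lam f hfmeas y]
    rw [setLIntegral_congr_fun measurableSet_Ioi (fun x hx => by
      rw [expM_Ioi_nonpos (mul_neg_of_neg_of_pos hy hx).le, mul_one,
        show ENNReal.ofReal (Real.exp (lam ^ α) * Real.exp (-lam * x) * f x)
          = ENNReal.ofReal (Real.exp (lam ^ α) * Real.exp (-lam * x) * f x)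
            * ENNReal.ofReal (Real.exp (-((0:ℝ) * x))) by simp])]
    rw [key 0 le_rfl]
    simp
  have hdiv : Measurable fun p : ℝ × ℝ => p.2 / p.1 := measurable_snd.div measurable_fst
  have hg : Measurable fun t : ℝ => (lam ^ α + t) ^ (1 / α) - lam :=
    ((Real.continuous_rpow_const (by positivity)).measurable.comp
      (measurable_const.add measurable_id)).sub measurable_const
  have hμuniv : (tiltedStable α lam f) Set.univ = 1 := by
    rw [tiltedStable, withDensity_apply _ MeasurableSet.univ, Measure.restrict_univ,
      lintegral_indicator measurableSet_Ioi]
    rw [setLIntegral_congr_fun measurableSet_Ioi (fun x hx => by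
      rw [show ENNReal.ofReal (Real.exp (lam ^ α) * Real.exp (-lam * x) * f x)
          = ENNReal.ofReal (Real.exp (lam ^ α) * Real.exp (-lam * x) * f x)
            * ENNReal.ofReal (Real.exp (-((0:ℝ) * x))) by simp])]
    rw [key 0 le_rfl]
    simp
  haveI hμprob : IsProbabilityMeasure (tiltedStable α lam f) := ⟨hμuniv⟩
  haveI : IsProbabilityMeasure
      (Measure.map (fun p : ℝ × ℝ => p.2 / p.1) ((tiltedStable α lam f).prod expM)) :=
    Measure.isProbabilityMeasure_map hdiv.aemeasurable
  haveI : IsProbabilityMeasure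
      (Measure.map (fun t => (lam ^ α + t) ^ (1 / α) - lam) expM) :=
    Measure.isProbabilityMeasure_map hg.aemeasurable
  have hlamα : (0:ℝ) < lam ^ α := Real.rpow_pos_of_pos hlam α
  have hαinv : (0:ℝ) < 1 / α := by positivity
  have hginv : ∀ y : ℝ,
      Set.Ioi (0:ℝ) ∩ ((fun t => (lam ^ α + t) ^ (1 / α) - lam) ⁻¹' Set.Ioi y)
        = if 0 ≤ y then Set.Ioi ((lam + y) ^ α - lam ^ α) else Set.Ioi (0:ℝ) := by
    intro y
    split_ifs with hy
    · have hc0 : 0 ≤ (lam + y) ^ α - lam ^ α := by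
        have := Real.rpow_le_rpow hlam.le (by linarith : lam ≤ lam + y) hα0.le
        linarith
      rw [← inter_eq_right.mpr (Ioi_subset_Ioi hc0)]
      ext t
      simp only [mem_inter_iff, mem_preimage, mem_Ioi, and_congr_right_iff]
      intro ht
      have hbase : (0:ℝ) ≤ lam ^ α + t := by linarith
      constructor
      · intro h
        have h' : lam + y < (lam ^ α + t) ^ (1 / α) := by linarith
        have h2 := Real.rpow_lt_rpow (by linarith) h' hα0
        rw [one_div, Real.rpow_inv_rpow hbase (ne_of_gt hα0)] at h2
        linarith
      · intro h
        have h2 : (lam + y) ^ α < lam ^ α + t := by linarith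
        have h3 := Real.rpow_lt_rpow (Real.rpow_nonneg (by linarith) α) h2 hαinv
        rw [one_div, Real.rpow_rpow_inv (by linarith) (ne_of_gt hα0)] at h3
        rw [one_div]
        linarith
    · rw [inter_eq_left]
      intro t ht
      have ht0 : (0:ℝ) < t := ht
      have h2 := Real.rpow_lt_rpow hlamα.le (by linarith : lam ^ α < lam ^ α + t) hαinv
      rw [one_div, Real.rpow_rpow_inv hlam.le (ne_of_gt hα0)] at h2
      simp only [mem_preimage, mem_Ioi]
      push_neg at hy
      rw [one_div]
      linarith
  refine ext_of_generate_finite _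
    (BorelSpace.measurable_eq.trans (borel_eq_generateFrom_Ioi ℝ)) isPiSystem_Ioi ?_
    (by rw [measure_univ, measure_univ])
  rintro s ⟨y, rfl⟩
  rw [Measure.map_apply hdiv measurableSet_Ioi, Measure.map_apply hg measurableSet_Ioi]
  have hpre : (fun p : ℝ × ℝ => p.2 / p.1) ⁻¹' Set.Ioi y = {p : ℝ × ℝ | y < p.2 / p.1} := rfl
  rw [hpre, expM_apply (hg measurableSet_Ioi), hginv y]
  rcases le_or_gt 0 y with hy | hy
  · rw [if_pos hy, part1 y hy, expJ]
  · rw [if_neg (not_le.mpr hy), part1' y hy, expJ]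
    simp
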